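/- Let σ be a chord diagram and let φ, φ' be two framings of σ that assign the same ordered pair to every chord except one chord z, on which the ordered pair is reversed. Then I_{φ'}(x, y) = I_φ(x, y) for all distinct chords x, y both different from z, and for every chord x ≠ z one has I_{φ'}(x, z) + I_φ(x, z) = card(N(x) ∖ {z}) in ZMod 2, where N(x) is the set of chords interlaced with x. -/

import Mathlib

/-- The open cyclic arc `(a, b)` in `ZMod (2n)`: the points `a + s` with `0 < s < t`,
where `t = (b - a).val` is the representative of `b - a` in `[0, 2n)`. -/
def arc (n : ℕ) (a b : ZMod (2 * n)) : Set (ZMod (2 * n)) :=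
  {x | ∃ s : ℕ, 0 < s ∧ s < (b - a).val ∧ x = a + (s : ZMod (2 * n))}

/-- Two chords with endpoints `{x1, x2}` and `{y1, y2}` are interlaced iff exactly
one of `y1`, `y2` lies in the arc `(x1, x2)`. -/
def Interlaced (n : ℕ) (x1 x2 y1 y2 : ZMod (2 * n)) : Prop :=
  Xor' (y1 ∈ arc n x1 x2) (y2 ∈ arc n x1 x2)

/-- A framing of the chord diagram `σ`, encoded as the set `S` of `∞`-endpoints:
exactly one endpoint of each chord belongs to `S`. -/
def IsFraming (n : ℕ) (σ : Equiv.Perm (ZMod (2 * n))) (S : Set (ZMod (2 * n))) : Prop :=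
  ∀ i, i ∈ S ↔ σ i ∉ S

open scoped Classical in
/-- The `∞`-endpoint of the chord through `i`, for the framing `S`. -/
noncomputable def inftyEnd {n : ℕ} (σ : Equiv.Perm (ZMod (2 * n)))
    (S : Set (ZMod (2 * n))) (i : ZMod (2 * n)) : ZMod (2 * n) :=
  if i ∈ S then i else σ i

open scoped Classical in
/-- The intersection form `I_φ` of the framed chord diagram `σ`, evaluated on the
chords whose `∞`-endpoints are `p` and `q` (so the ordered endpoint pairs are
`(p, σ p)` and `(q, σ q)`): it is `E(x,y)` plus the number of ordered pairs
`(a, σ a)` forming a chord with `a ∈ (p, σ p)` and `σ a ∈ (q, σ q)`, in `ZMod 2`. -/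
noncomputable def interForm (n : ℕ) (σ : Equiv.Perm (ZMod (2 * n)))
    (p q : ZMod (2 * n)) : ZMod 2 :=
  (if Interlaced n p (σ p) q (σ q) then 1 else 0) +
    (({a : ZMod (2 * n) | a ∈ arc n p (σ p) ∧ σ a ∈ arc n q (σ q)}).ncard : ZMod 2)

section aux
variable {n : ℕ} [NeZero (2 * n)]

lemma val_rev {a b : ZMod (2*n)} (hab : a ≠ b) :
    (b - a).val + (a - b).val = 2*n := by
  have h : ((b-a) + (a-b)) = 0 := by ring
  have hv := ZMod.val_add (b-a) (a-b)
  rw [h, ZMod.val_zero] at hv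
  have h1 : (b-a).val < 2*n := ZMod.val_lt _
  have h2 : (a-b).val < 2*n := ZMod.val_lt _
  have h3 : (b-a).val ≠ 0 := by
    rw [Ne, ZMod.val_eq_zero, sub_eq_zero]; exact fun h => hab h.symm
  rcases Nat.lt_or_ge ((b-a).val + (a-b).val) (2*n) with h' | h'
  · rw [Nat.mod_eq_of_lt h'] at hv; omega
  · rw [Nat.mod_eq_sub_mod h', Nat.mod_eq_of_lt (by omega)] at hv; omega

lemma mem_arc_iff (a b x : ZMod (2*n)) :
    x ∈ arc n a b ↔ 0 < (x - a).val ∧ (x - a).val < (b - a).val := by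
  constructor
  · rintro ⟨s, hs0, hst, rfl⟩
    have hlt : s < 2*n := lt_of_lt_of_le hst (le_of_lt (ZMod.val_lt _))
    have h : (a + (s : ZMod (2*n))) - a = (s : ZMod (2*n)) := by ring
    rw [h, ZMod.val_natCast_of_lt hlt]
    exact ⟨hs0, hst⟩
  · rintro ⟨h0, h1⟩
    refine ⟨(x - a).val, h0, h1, ?_⟩
    rw [ZMod.natCast_val, ZMod.cast_id]; ring

lemma not_mem_arc_left (a b : ZMod (2*n)) : a ∉ arc n a b := by
  rw [mem_arc_iff]; simp

lemma not_mem_arc_right (a b : ZMod (2*n)) : b ∉ arc n a b := by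
  rw [mem_arc_iff]; omega

lemma mem_arc_rev {a b : ZMod (2*n)} (hab : a ≠ b) (x : ZMod (2*n)) :
    x ∈ arc n b a ↔ (x ≠ a ∧ x ≠ b ∧ x ∉ arc n a b) := by
  rw [mem_arc_iff, mem_arc_iff]
  have h1 : (x - a).val = ((x - b).val + (b - a).val) % (2*n) := by
    have h : x - a = (x - b) + (b - a) := by ring
    rw [h, ZMod.val_add]
  have h2 : (b - a).val + (a - b).val = 2*n := val_rev hab
  have hu : (x - a).val < 2*n := ZMod.val_lt _
  have hu' : (x - b).val < 2*n := ZMod.val_lt _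
  have hxa : x ≠ a ↔ (x - a).val ≠ 0 := by
    rw [Ne, Ne, ZMod.val_eq_zero, sub_eq_zero]
  have hxb : x ≠ b ↔ (x - b).val ≠ 0 := by
    rw [Ne, Ne, ZMod.val_eq_zero, sub_eq_zero]
  have ht : (b - a).val ≠ 0 := by
    rw [Ne, ZMod.val_eq_zero, sub_eq_zero]; exact fun h => hab h.symm
  rw [hxa, hxb]
  rcases Nat.lt_or_ge ((x - b).val + (b - a).val) (2*n) with h' | h'
  · rw [Nat.mod_eq_of_lt h'] at h1; omega
  · rw [Nat.mod_eq_sub_mod h', Nat.mod_eq_of_lt (by omega)] at h1; omega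

end aux

lemma even_card_of_invol {α : Type*} [DecidableEq α] (f : α → α) (hf : ∀ a, f (f a) = a) :
    ∀ (s : Finset α), (∀ a ∈ s, f a ∈ s) → (∀ a ∈ s, f a ≠ a) → Even s.card := by
  intro s
  induction s using Finset.strongInduction with
  | _ s ih =>
    intro hcl hnf
    rcases s.eq_empty_or_nonempty with rfl | ⟨a, ha⟩
    · simp
    · have hfa : f a ∈ s := hcl a ha
      have hne : f a ≠ a := hnf a ha
      set t := (s.erase a).erase (f a) with ht
      have hfa' : f a ∈ s.erase a := Finset.mem_erase.mpr ⟨hne, hfa⟩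
      have hts : t ⊆ s := (Finset.erase_subset _ _).trans (Finset.erase_subset _ _)
      have hat : a ∉ t := by simp [ht]
      have hss : t ⊂ s := ⟨hts, fun hsub => hat (hsub ha)⟩
      have hcard : s.card = t.card + 2 := by
        have h3 : 0 < (s.erase a).card := Finset.card_pos.mpr ⟨f a, hfa'⟩
        have h4 : 0 < s.card := Finset.card_pos.mpr ⟨a, ha⟩
        have h5 : (s.erase a).card = s.card - 1 := Finset.card_erase_of_mem ha
        rw [ht, Finset.card_erase_of_mem hfa', h5]
        omega
      have hclt : ∀ b ∈ t, f b ∈ t := by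
        intro b hb
        rw [ht, Finset.mem_erase, Finset.mem_erase] at hb ⊢
        refine ⟨fun h => hb.2.1 ?_, fun h => hb.1 ?_, hcl b hb.2.2⟩
        · rw [← hf b, h, hf]
        · rw [← hf b, h]
      have hnft : ∀ b ∈ t, f b ≠ b := fun b hb => hnf b (hts hb)
      obtain ⟨m, hm⟩ := ih t hss hclt hnft
      exact ⟨m + 1, by omega⟩

lemma even_ncard_of_invol {α : Type*} [Fintype α] [DecidableEq α] (f : α → α)
    (hf : ∀ a, f (f a) = a) (s : Set α) (hcl : ∀ a ∈ s, f a ∈ s)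
    (hnf : ∀ a ∈ s, f a ≠ a) : Even s.ncard := by
  classical
  rw [Set.ncard_eq_toFinset_card s s.toFinite]
  refine even_card_of_invol f hf _ ?_ ?_ <;> intro a ha <;>
    rw [Set.Finite.mem_toFinset] at * <;> [exact hcl a ha; exact hnf a ha]

lemma key (n : ℕ) [NeZero (2*n)] (σ : Equiv.Perm (ZMod (2*n)))
    (hinv : ∀ i, σ (σ i) = i) (hfix : ∀ i, σ i ≠ i) (p z : ZMod (2*n)) :
    interForm n σ p z + interForm n σ p (σ z) =
      (({a : ZMod (2*n) | a ∈ arc n p (σ p) ∧ σ a ∉ arc n p (σ p) ∧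
          a ≠ z ∧ a ≠ σ z}).ncard : ZMod 2) := by
  classical
  haveI : Fintype (ZMod (2*n)) := ZMod.fintype _
  have hzz : z ≠ σ z := fun h => hfix z h.symm
  have hσe : ∀ a w : ZMod (2*n), σ a = w ↔ a = σ w :=
    fun a w => ⟨fun h => by rw [← h, hinv], fun h => by rw [h, hinv]⟩
  unfold interForm
  rw [hinv z]
  have hifeq : (if Interlaced n p (σ p) (σ z) z then (1:ZMod 2) else 0)
      = (if Interlaced n p (σ p) z (σ z) then (1:ZMod 2) else 0) := by
    unfold Interlaced Xor'; rw [xor_comm]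
  rw [hifeq]
  have hsplit : ∀ e c1 c2 : ZMod 2, e + c1 + (e + c2) = c1 + c2 := by decide
  rw [hsplit]
  rw [← Nat.cast_add]
  set A := arc n p (σ p) with hA
  have hdisj : Disjoint {a : ZMod (2*n) | a ∈ A ∧ σ a ∈ arc n z (σ z)}
      {a : ZMod (2*n) | a ∈ A ∧ σ a ∈ arc n (σ z) z} := by
    rw [Set.disjoint_left]; rintro a ⟨_, h1⟩ ⟨_, h2⟩
    rw [mem_arc_rev hzz] at h2; exact h2.2.2 h1
  rw [← Set.ncard_union_eq hdisj (Set.toFinite _) (Set.toFinite _)]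
  have hU : {a : ZMod (2*n) | a ∈ A ∧ σ a ∈ arc n z (σ z)}
        ∪ {a : ZMod (2*n) | a ∈ A ∧ σ a ∈ arc n (σ z) z}
      = {a : ZMod (2*n) | a ∈ A ∧ a ≠ σ z ∧ a ≠ z} := by
    ext a
    simp only [Set.mem_union, Set.mem_setOf_eq, ← and_or_left]
    refine and_congr_right fun _ => ?_
    rw [mem_arc_rev hzz]
    constructor
    · rintro (h | ⟨h1, h2, _⟩)
      · refine ⟨fun he => ?_, fun he => ?_⟩
        · exact not_mem_arc_left z (σ z) (by rwa [he, hinv] at h)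
        · exact not_mem_arc_right z (σ z) (by rwa [he] at h)
      · exact ⟨fun he => h1 (by rw [he, hinv]), fun he => h2 (by rw [he])⟩
    · rintro ⟨h1, h2⟩
      by_cases h : σ a ∈ arc n z (σ z)
      · exact Or.inl h
      · exact Or.inr ⟨fun he => h1 ((hσe a z).mp he), fun he => h2 (by rw [← hinv a, he, hinv]), h⟩
  rw [hU]
  have hB : {a : ZMod (2*n) | a ∈ A ∧ a ≠ σ z ∧ a ≠ z}
      = {a : ZMod (2*n) | a ∈ A ∧ σ a ∈ A ∧ a ≠ σ z ∧ a ≠ z}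
        ∪ {a : ZMod (2*n) | a ∈ A ∧ σ a ∉ A ∧ a ≠ z ∧ a ≠ σ z} := by
    ext a; simp only [Set.mem_union, Set.mem_setOf_eq]; tauto
  have hdisj2 : Disjoint {a : ZMod (2*n) | a ∈ A ∧ σ a ∈ A ∧ a ≠ σ z ∧ a ≠ z}
      {a : ZMod (2*n) | a ∈ A ∧ σ a ∉ A ∧ a ≠ z ∧ a ≠ σ z} := by
    rw [Set.disjoint_left]; rintro a ⟨_, h1, _⟩ ⟨_, h2, _⟩; exact h2 h1
  rw [hB, Set.ncard_union_eq hdisj2 (Set.toFinite _) (Set.toFinite _)]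
  have heven : Even ({a : ZMod (2*n) | a ∈ A ∧ σ a ∈ A ∧ a ≠ σ z ∧ a ≠ z}).ncard := by
    refine even_ncard_of_invol σ hinv _ ?_ ?_
    · rintro a ⟨ha1, ha2, ha3, ha4⟩
      refine ⟨ha2, by rwa [hinv], fun h => ha4 ?_, fun h => ha3 ?_⟩
      · rw [← hinv a, h, hinv]
      · rw [← hinv a, h]
    · rintro a ⟨_, _, _, _⟩; exact hfix a
  obtain ⟨m, hm⟩ := heven
  rw [hm, Nat.cast_add, Nat.cast_add, CharTwo.add_self_eq_zero, zero_add]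

lemma card_swap (n : ℕ) [NeZero (2*n)] (σ : Equiv.Perm (ZMod (2*n)))
    (hinv : ∀ i, σ (σ i) = i) (hfix : ∀ i, σ i ≠ i) (x z : ZMod (2*n)) :
    ({a : ZMod (2*n) | a ∈ arc n (σ x) x ∧ σ a ∉ arc n (σ x) x ∧ a ≠ z ∧ a ≠ σ z}).ncard
      = ({a : ZMod (2*n) | a ∈ arc n x (σ x) ∧ σ a ∉ arc n x (σ x) ∧ a ≠ z ∧ a ≠ σ z}).ncard := by
  have hxx : x ≠ σ x := fun h => hfix x h.symm
  have himg : (σ : ZMod (2*n) → ZMod (2*n)) ''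
      {a : ZMod (2*n) | a ∈ arc n (σ x) x ∧ σ a ∉ arc n (σ x) x ∧ a ≠ z ∧ a ≠ σ z}
      = {a : ZMod (2*n) | a ∈ arc n x (σ x) ∧ σ a ∉ arc n x (σ x) ∧ a ≠ z ∧ a ≠ σ z} := by
    ext b
    have hmem : b ∈ (σ : ZMod (2*n) → ZMod (2*n)) ''
        {a : ZMod (2*n) | a ∈ arc n (σ x) x ∧ σ a ∉ arc n (σ x) x ∧ a ≠ z ∧ a ≠ σ z}
        ↔ σ b ∈ {a : ZMod (2*n) | a ∈ arc n (σ x) x ∧ σ a ∉ arc n (σ x) x ∧ a ≠ z ∧ a ≠ σ z} := by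
      constructor
      · rintro ⟨a, ha, rfl⟩
        show σ (σ a) ∈ _
        rwa [hinv]
      · intro h; exact ⟨σ b, h, hinv b⟩
    rw [hmem]
    simp only [Set.mem_setOf_eq]
    rw [hinv b, mem_arc_rev hxx (σ b), mem_arc_rev hxx b]
    have e1 : σ b = x ↔ b = σ x := ⟨fun h => by rw [← hinv b, h], fun h => by rw [h, hinv]⟩
    have e2 : σ b = σ x ↔ b = x := ⟨fun h => by rw [← hinv b, h, hinv], fun h => by rw [h]⟩
    have e3 : σ b = z ↔ b = σ z := ⟨fun h => by rw [← hinv b, h], fun h => by rw [h, hinv]⟩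
    have e4 : σ b = σ z ↔ b = z := ⟨fun h => by rw [← hinv b, h, hinv], fun h => by rw [h]⟩
    have e5 : b ∈ arc n x (σ x) → b ≠ x := fun h hb => not_mem_arc_left x (σ x) (hb ▸ h)
    have e6 : b ∈ arc n x (σ x) → b ≠ σ x := fun h hb => not_mem_arc_right x (σ x) (hb ▸ h)
    constructor
    · rintro ⟨⟨hs1, hs2, hs3⟩, hs4, hs5, hs6⟩
      have hbA : b ∈ arc n x (σ x) := by
        by_contra h
        exact hs4 ⟨fun he => hs2 (e2.mpr he), fun he => hs1 (e1.mpr he), h⟩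
      exact ⟨hbA, hs3, fun he => hs6 (e4.mpr he), fun he => hs5 (e3.mpr he)⟩
    · rintro ⟨hbA, hsbA, hbz, hbsz⟩
      refine ⟨⟨fun he => e6 hbA (e1.mp he), fun he => e5 hbA (e2.mp he), hsbA⟩,
        fun hc => hc.2.2 hbA, fun he => hbsz (e3.mp he), fun he => hbz (e4.mp he)⟩
  rw [← himg, Set.ncard_image_of_injective _ σ.injective]

/-- If two framings `S`, `S'` of a chord diagram `σ` agree on every chord except the
chord of `z`, where the ordering is reversed, then the intersection forms agree on
pairs of chords not involving `z`, and for any chord `x ≠ z` the forms at `(x, z)`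
differ by `card (N(x) ∖ {z})`, the number of chords other than `z` interlaced
with `x`. -/
theorem stmt16 (n : ℕ) (hn : 1 ≤ n) (σ : Equiv.Perm (ZMod (2 * n)))
    (hinv : ∀ i, σ (σ i) = i) (hfix : ∀ i, σ i ≠ i)
    (S S' : Set (ZMod (2 * n))) (hS : IsFraming n σ S) (hS' : IsFraming n σ S')
    (z : ZMod (2 * n))
    (hsame : ∀ a : ZMod (2 * n), a ≠ z → a ≠ σ z → (a ∈ S ↔ a ∈ S'))
    (hflip : z ∈ S ↔ z ∉ S') :
    (∀ x y : ZMod (2 * n), y ≠ x → y ≠ σ x →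
      x ≠ z → x ≠ σ z → y ≠ z → y ≠ σ z →
      interForm n σ (inftyEnd σ S' x) (inftyEnd σ S' y) =
        interForm n σ (inftyEnd σ S x) (inftyEnd σ S y)) ∧
    (∀ x : ZMod (2 * n), x ≠ z → x ≠ σ z →
      interForm n σ (inftyEnd σ S' x) (inftyEnd σ S' z) +
          interForm n σ (inftyEnd σ S x) (inftyEnd σ S z) =
        (({a : ZMod (2 * n) | a ∈ arc n x (σ x) ∧ σ a ∉ arc n x (σ x) ∧
            a ≠ z ∧ a ≠ σ z}).ncard : ZMod 2)) := by
  haveI : NeZero (2 * n) := ⟨by omega⟩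
  classical
  have hEq : ∀ a : ZMod (2 * n), a ≠ z → a ≠ σ z → inftyEnd σ S' a = inftyEnd σ S a := by
    intro a h1 h2
    unfold inftyEnd
    by_cases h : a ∈ S
    · rw [if_pos ((hsame a h1 h2).mp h), if_pos h]
    · rw [if_neg (fun h' => h ((hsame a h1 h2).mpr h')), if_neg h]
  constructor
  · intro x y _ _ hxz hxσz hyz hyσz
    rw [hEq x hxz hxσz, hEq y hyz hyσz]
  · intro x hxz hxσz
    rw [hEq x hxz hxσz]
    have final : interForm n σ (inftyEnd σ S x) z + interForm n σ (inftyEnd σ S x) (σ z) =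
        (({a : ZMod (2 * n) | a ∈ arc n x (σ x) ∧ σ a ∉ arc n x (σ x) ∧
            a ≠ z ∧ a ≠ σ z}).ncard : ZMod 2) := by
      by_cases hx : x ∈ S
      · have e : inftyEnd σ S x = x := by unfold inftyEnd; rw [if_pos hx]
        rw [e]
        exact key n σ hinv hfix x z
      · have e : inftyEnd σ S x = σ x := by unfold inftyEnd; rw [if_neg hx]
        rw [e]
        have hk := key n σ hinv hfix (σ x) z
        rw [hinv x] at hk
        rw [hk, card_swap n σ hinv hfix x z]
    by_cases hz : z ∈ S
    · have e1 : inftyEnd σ S z = z := by unfold inftyEnd; rw [if_pos hz]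
      have e2 : inftyEnd σ S' z = σ z := by unfold inftyEnd; rw [if_neg (hflip.mp hz)]
      rw [e1, e2, add_comm]
      exact final
    · have hz' : z ∈ S' := by by_contra h; exact hz (hflip.mpr h)
      have e1 : inftyEnd σ S z = σ z := by unfold inftyEnd; rw [if_neg hz]
      have e2 : inftyEnd σ S' z = z := by unfold inftyEnd; rw [if_pos hz']
      rw [e1, e2]
      exact final
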